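/- Fix n ≥ 1, m ≥ 1, T > 0, x₀ ∈ ℝⁿ, an n×n real matrix A and an n×m real matrix B. Let r₁ : ℝⁿ → ℝ be concave and continuous, r₂ : ℝ^m → ℝ an arbitrary function, and q : ℝⁿ → ℝ concave and continuous. Suppose that for every α in the box [0,1]^m there is a function x_α : ℝ → ℝⁿ with x_α(0) = x₀ and x_α'(t) = A x_α(t) + B α for all t ∈ [0,T]. Then the reformulated payoff function Ĵ(α) := ∫₀ᵀ r₁(x_α(t)) dt + T · ( r₂(0) + Σ_{i=1}^m α_i ( r₂(e_i) − r₂(0) ) ) + q(x_α(T)) is concave on [0,1]^m (no concavity of r₂ is required). -/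

import Mathlib

/-- Concavity of the reformulated payoff of a linear combinatorial
dynamical system: with `r₁`, `q` concave and continuous, `r₂` arbitrary, and `X α`
solving `x' = A x + B α`, `x(0) = x₀` for each `α` in the box `[0,1]^m`, the
reformulated payoff
`Ĵ(α) = ∫₀ᵀ r₁(X α t) dt + T·(r₂ 0 + Σ_i α_i (r₂ e_i − r₂ 0)) + q(X α T)` is
concave on the box (no concavity of `r₂` required). -/
theorem stmt_17 (n m : ℕ) (hn : 1 ≤ n) (hm : 1 ≤ m) (T : ℝ) (hT : 0 < T)
    (x₀ : Fin n → ℝ)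
    (A : Matrix (Fin n) (Fin n) ℝ) (B : Matrix (Fin n) (Fin m) ℝ)
    (r₁ : (Fin n → ℝ) → ℝ) (r₂ : (Fin m → ℝ) → ℝ) (q : (Fin n → ℝ) → ℝ)
    (hr₁ : ConcaveOn ℝ Set.univ r₁) (hr₁c : Continuous r₁)
    (hq : ConcaveOn ℝ Set.univ q) (hqc : Continuous q)
    (X : (Fin m → ℝ) → ℝ → (Fin n → ℝ))
    (hX0 : ∀ α : Fin m → ℝ, (∀ i, α i ∈ Set.Icc (0 : ℝ) 1) → X α 0 = x₀)
    (hXode : ∀ α : Fin m → ℝ, (∀ i, α i ∈ Set.Icc (0 : ℝ) 1) →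
      ∀ t ∈ Set.Icc (0 : ℝ) T,
        HasDerivAt (X α) (A.mulVec (X α t) + B.mulVec α) t) :
    ConcaveOn ℝ {α : Fin m → ℝ | ∀ i, α i ∈ Set.Icc (0 : ℝ) 1}
      (fun α => (∫ t in (0 : ℝ)..T, r₁ (X α t))
        + T * (r₂ 0 + ∑ i : Fin m, α i * (r₂ (Pi.single i (1 : ℝ)) - r₂ 0))
        + q (X α T)) := by
  have hSconv : Convex ℝ {α : Fin m → ℝ | ∀ i, α i ∈ Set.Icc (0 : ℝ) 1} := by
    have hset : {α : Fin m → ℝ | ∀ i, α i ∈ Set.Icc (0 : ℝ) 1}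
        = Set.pi Set.univ (fun _ : Fin m => Set.Icc (0 : ℝ) 1) := by
      ext x; simp only [Set.mem_setOf_eq, Set.mem_univ_pi]
    rw [hset]
    exact convex_pi fun i _ => convex_Icc 0 1
  refine ⟨hSconv, ?_⟩
  intro α hα β hβ a b ha hb hab
  set c : Fin m → ℝ := a • α + b • β with hc_def
  have hc : ∀ i, c i ∈ Set.Icc (0 : ℝ) 1 := hSconv hα hβ ha hb hab
  -- the convex combination of the trajectories
  set Z : ℝ → Fin n → ℝ := fun t => a • X α t + b • X β t with hZ_def
  -- Lipschitz vector field
  set L : (Fin n → ℝ) →L[ℝ] (Fin n → ℝ) :=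
    LinearMap.toContinuousLinearMap A.mulVecLin with hL_def
  have hLapp : ∀ x, L x = A.mulVec x := fun x => rfl
  have hlip : ∀ t : ℝ, LipschitzWith ‖L‖₊
      (fun x : Fin n → ℝ => A.mulVec x + B.mulVec c) := by
    intro t x y
    have := L.lipschitz x y
    simpa [hLapp, edist_eq_enorm_sub, add_sub_add_right_eq_sub] using this
  -- continuity of trajectories on [0,T]
  have hcont : ∀ (γ : Fin m → ℝ), (∀ i, γ i ∈ Set.Icc (0 : ℝ) 1) →
      ContinuousOn (X γ) (Set.Icc 0 T) := by
    intro γ hγ t ht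
    exact (hXode γ hγ t ht).continuousAt.continuousWithinAt
  -- Z solves the ODE with control c
  have hZode : ∀ t ∈ Set.Icc (0 : ℝ) T,
      HasDerivAt Z (A.mulVec (Z t) + B.mulVec c) t := by
    intro t ht
    have h1 := ((hXode α hα t ht).const_smul a).add ((hXode β hβ t ht).const_smul b)
    refine HasDerivAt.congr_deriv (f := Z) h1 ?_
    simp only [hZ_def, hc_def, Matrix.mulVec_add, Matrix.mulVec_smul, smul_add]
    module
  -- uniqueness: X c = Z on [0,T]
  have hXcZ : Set.EqOn (X c) Z (Set.Icc 0 T) := by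
    have hf' : ∀ t ∈ Set.Ico (0:ℝ) T,
        HasDerivWithinAt (X c) (A.mulVec (X c t) + B.mulVec c) (Set.Ici t) t :=
      fun t ht => (hXode c hc t (Set.Ico_subset_Icc_self ht)).hasDerivWithinAt
    have hg' : ∀ t ∈ Set.Ico (0:ℝ) T,
        HasDerivWithinAt Z (A.mulVec (Z t) + B.mulVec c) (Set.Ici t) t :=
      fun t ht => (hZode t (Set.Ico_subset_Icc_self ht)).hasDerivWithinAt
    have hgc : ContinuousOn Z (Set.Icc 0 T) :=
      fun t ht => (hZode t ht).continuousAt.continuousWithinAt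
    have h0 : X c 0 = Z 0 := by
      simp only [hZ_def, hX0 α hα, hX0 β hβ, hX0 c hc]
      rw [← add_smul, hab, one_smul]
    exact ODE_solution_unique hlip (hcont c hc) hf' hgc hg' h0
  -- pointwise concavity inequality along trajectories
  have hpt : ∀ t ∈ Set.Icc (0 : ℝ) T,
      a * r₁ (X α t) + b * r₁ (X β t) ≤ r₁ (X c t) := by
    intro t ht
    rw [hXcZ ht]
    simpa [smul_eq_mul] using
      hr₁.2 (Set.mem_univ (X α t)) (Set.mem_univ (X β t)) ha hb hab
  -- integrability
  have huIcc : Set.uIcc (0 : ℝ) T = Set.Icc 0 T := Set.uIcc_of_le hT.le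
  have hint : ∀ (γ : Fin m → ℝ), (∀ i, γ i ∈ Set.Icc (0 : ℝ) 1) →
      IntervalIntegrable (fun t => r₁ (X γ t)) MeasureTheory.volume 0 T := by
    intro γ hγ
    apply ContinuousOn.intervalIntegrable
    rw [huIcc]
    exact hr₁c.comp_continuousOn (hcont γ hγ)
  have hintα := hint α hα
  have hintβ := hint β hβ
  have hintc := hint c hc
  -- the integral inequality
  have hI : a * (∫ t in (0:ℝ)..T, r₁ (X α t)) + b * (∫ t in (0:ℝ)..T, r₁ (X β t))
      ≤ ∫ t in (0:ℝ)..T, r₁ (X c t) := by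
    have heq : a * (∫ t in (0:ℝ)..T, r₁ (X α t)) + b * (∫ t in (0:ℝ)..T, r₁ (X β t))
        = ∫ t in (0:ℝ)..T, (a * r₁ (X α t) + b * r₁ (X β t)) := by
      rw [intervalIntegral.integral_add (hintα.const_mul a) (hintβ.const_mul b),
        intervalIntegral.integral_const_mul, intervalIntegral.integral_const_mul]
    rw [heq]
    exact intervalIntegral.integral_mono_on hT.le
      ((hintα.const_mul a).add (hintβ.const_mul b)) hintc hpt
  -- linear term equality
  have hsum : (∑ i : Fin m, c i * (r₂ (Pi.single i (1 : ℝ)) - r₂ 0))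
      = a * (∑ i : Fin m, α i * (r₂ (Pi.single i (1 : ℝ)) - r₂ 0))
        + b * (∑ i : Fin m, β i * (r₂ (Pi.single i (1 : ℝ)) - r₂ 0)) := by
    simp only [hc_def, Pi.add_apply, Pi.smul_apply, smul_eq_mul, add_mul,
      Finset.sum_add_distrib, Finset.mul_sum, mul_assoc]
  -- terminal term inequality
  have hTmem : T ∈ Set.Icc (0 : ℝ) T := ⟨hT.le, le_refl T⟩
  have hqle : a * q (X α T) + b * q (X β T) ≤ q (X c T) := by
    rw [hXcZ hTmem]
    simpa [smul_eq_mul] using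
      hq.2 (Set.mem_univ (X α T)) (Set.mem_univ (X β T)) ha hb hab
  -- combine
  simp only [smul_eq_mul]
  have hlin : T * (r₂ 0 + ∑ i : Fin m, c i * (r₂ (Pi.single i (1 : ℝ)) - r₂ 0))
      = a * (T * (r₂ 0 + ∑ i : Fin m, α i * (r₂ (Pi.single i (1 : ℝ)) - r₂ 0)))
        + b * (T * (r₂ 0 + ∑ i : Fin m, β i * (r₂ (Pi.single i (1 : ℝ)) - r₂ 0))) := by
    rw [hsum]
    linear_combination (-(T * r₂ 0)) * hab
  calc a * ((∫ t in (0:ℝ)..T, r₁ (X α t))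
        + T * (r₂ 0 + ∑ i : Fin m, α i * (r₂ (Pi.single i (1 : ℝ)) - r₂ 0)) + q (X α T))
      + b * ((∫ t in (0:ℝ)..T, r₁ (X β t))
        + T * (r₂ 0 + ∑ i : Fin m, β i * (r₂ (Pi.single i (1 : ℝ)) - r₂ 0)) + q (X β T))
      = (a * (∫ t in (0:ℝ)..T, r₁ (X α t)) + b * (∫ t in (0:ℝ)..T, r₁ (X β t)))
        + (a * (T * (r₂ 0 + ∑ i : Fin m, α i * (r₂ (Pi.single i (1 : ℝ)) - r₂ 0)))
          + b * (T * (r₂ 0 + ∑ i : Fin m, β i * (r₂ (Pi.single i (1 : ℝ)) - r₂ 0))))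
        + (a * q (X α T) + b * q (X β T)) := by ring
    _ ≤ (∫ t in (0:ℝ)..T, r₁ (X c t))
        + T * (r₂ 0 + ∑ i : Fin m, c i * (r₂ (Pi.single i (1 : ℝ)) - r₂ 0))
        + q (X c T) := by
        exact add_le_add (add_le_add hI (le_of_eq hlin.symm)) hqle
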